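/- Let f : [0,1] → [0,1] be continuous and let J be a closed interval with f^l(J) ⊆ J for some l ≥ 1. Then L = ⋂_{i≥0} f^{il}(J) is an interval (possibly degenerate) satisfying f^l(L) = L. -/

import Mathlib

open Set Function

theorem stmt_1 (f : ℝ → ℝ) (hf : ContinuousOn f (Icc 0 1))
    (hmaps : MapsTo f (Icc 0 1) (Icc 0 1))
    (a b : ℝ) (hJ : Icc a b ⊆ Icc 0 1) (l : ℕ) (hl : 1 ≤ l)
    (hper : f^[l] '' Icc a b ⊆ Icc a b) :
    (⋂ i : ℕ, f^[i * l] '' Icc a b).OrdConnected ∧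
      f^[l] '' (⋂ i : ℕ, f^[i * l] '' Icc a b) = ⋂ i : ℕ, f^[i * l] '' Icc a b := by
  -- continuity of iterates on [0,1]
  have hcf : ∀ n : ℕ, ContinuousOn (f^[n]) (Icc (0:ℝ) 1) := by
    intro n
    induction n with
    | zero => simpa using continuousOn_id
    | succ n ih =>
      rw [Function.iterate_succ]
      exact ih.comp hf hmaps
  have hiter : ∀ i : ℕ, f^[i * l] = (f^[l])^[i] := by
    intro i
    rw [mul_comm, Function.iterate_mul]
  simp only [hiter]
  set g := f^[l] with hg
  by_cases hab : a ≤ b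
  · -- nonempty interval case
    set K : ℕ → Set ℝ := fun i => g^[i] '' Icc a b with hK
    have hK0 : K 0 = Icc a b := by simp [hK]
    have hKsucc : ∀ i, K (i + 1) = g '' K i := by
      intro i
      simp only [hK, Function.iterate_succ', Set.image_comp]
    have hKsub0 : ∀ i, K i ⊆ Icc a b := by
      intro i
      induction i with
      | zero => simp [hK0]
      | succ n ih =>
        rw [hKsucc]
        exact (Set.image_mono ih).trans hper
    have hKIcc : ∀ i, K i ⊆ Icc (0:ℝ) 1 := fun i => (hKsub0 i).trans hJ
    have hKanti : ∀ i, K (i + 1) ⊆ K i := by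
      intro i
      have : K (i + 1) = g^[i] '' (g '' Icc a b) := by
        simp only [hK, Function.iterate_succ, Set.image_comp]
      rw [this]
      exact Set.image_mono hper
    have hgcont : ContinuousOn g (Icc (0:ℝ) 1) := hcf l
    have hKicomp : ∀ i, IsCompact (K i) := by
      intro i
      have : ContinuousOn (g^[i]) (Icc a b) := by
        rw [hg, ← Function.iterate_mul, mul_comm]
        exact (hcf (i * l)).mono hJ
      exact isCompact_Icc.image_of_continuousOn this
    have hKne : ∀ i, (K i).Nonempty := by
      intro i
      exact (Set.nonempty_Icc.2 hab).image _
    have hKord : ∀ i, (K i).OrdConnected := by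
      intro i
      have hpc : IsPreconnected (K i) := by
        apply isPreconnected_Icc.image
        rw [hg, ← Function.iterate_mul, mul_comm]
        exact (hcf (i * l)).mono hJ
      exact hpc.ordConnected
    constructor
    · constructor
      intro x hx y hy z hz
      rw [Set.mem_iInter] at hx hy ⊢
      intro i
      exact (hKord i).out (hx i) (hy i) hz
    · apply Set.Subset.antisymm
      · rintro y ⟨x, hx, rfl⟩
        rw [Set.mem_iInter] at hx ⊢
        intro i
        have : g x ∈ g '' K i := Set.mem_image_of_mem g (hx i)
        rw [← hKsucc] at this
        exact hKanti i this
      · intro y hy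
        rw [Set.mem_iInter] at hy
        -- nested compact nonempty sets A i = {x ∈ K i | g x = y}
        set A : ℕ → Set ℝ := fun i => K i ∩ g ⁻¹' {y} with hA
        have hAne : ∀ i, (A i).Nonempty := by
          intro i
          have : y ∈ g '' K i := by rw [← hKsucc]; exact hy (i + 1)
          obtain ⟨x, hxK, hxy⟩ := this
          exact ⟨x, hxK, by simpa using hxy⟩
        have hAcl : ∀ i, IsClosed (A i) := by
          intro i
          exact ContinuousOn.preimage_isClosed_of_isClosed
            (hgcont.mono (hKIcc i)) (hKicomp i).isClosed isClosed_singleton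
        have hAcomp : ∀ i, IsCompact (A i) := fun i =>
          (hKicomp i).of_isClosed_subset (hAcl i) Set.inter_subset_left
        have hAsub : ∀ i, A (i + 1) ⊆ A i := fun i =>
          Set.inter_subset_inter_left _ (hKanti i)
        obtain ⟨x, hx⟩ := IsCompact.nonempty_iInter_of_sequence_nonempty_isCompact_isClosed
          A hAsub hAne (hAcomp 0) hAcl
        rw [Set.mem_iInter] at hx
        refine ⟨x, ?_, ?_⟩
        · rw [Set.mem_iInter]
          exact fun i => (hx i).1
        · simpa using (hx 0).2
  · -- empty interval
    have he : Icc a b = (∅ : Set ℝ) := Set.Icc_eq_empty hab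
    simp [he, Set.iInter_const]
    exact Set.ordConnected_empty
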